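/- Let O be the ring of integers of an imaginary quadratic field Q(√-d), and for positive integers m ≠ n let E_m = C/(Z+mO) and E_n = C/(Z+nO). Then the abelian surfaces E_m × E_m and E_n × E_n are not isomorphic as complex tori. -/
import Mathlib


/-- `ω_{-d}`: the standard generator of the ring of integers of `ℚ(√-d)`. -/
noncomputable def omegaD (d : ℕ) : ℂ :=
  if d % 4 = 3 then (1 + Real.sqrt d * Complex.I) / 2 else Real.sqrt d * Complex.I

/-- The ring of integers `O = ℤ + ω_{-d}ℤ` of `ℚ(√-d)`, as an additive subgroup of `ℂ`. -/
noncomputable def ringO (d : ℕ) : AddSubgroup ℂ :=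
  AddSubgroup.closure {1, omegaD d}

/-- The order `O_m = ℤ + m·O = ℤ + m·ω_{-d}ℤ` of conductor `m`. -/
noncomputable def orderO (d m : ℕ) : AddSubgroup ℂ :=
  AddSubgroup.closure {1, (m : ℂ) * omegaD d}

lemma mem_orderO_iff {d m : ℕ} {z : ℂ} :
    z ∈ orderO d m ↔ ∃ a b : ℤ, z = (a : ℂ) + (b : ℂ) * ((m : ℂ) * omegaD d) := by
  rw [orderO, AddSubgroup.mem_closure_pair]
  constructor
  · rintro ⟨a, b, rfl⟩; exact ⟨a, b, by push_cast [zsmul_eq_mul]; ring⟩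
  · rintro ⟨a, b, rfl⟩; exact ⟨a, b, by push_cast [zsmul_eq_mul]; ring⟩

lemma omegaD_im_pos {d : ℕ} (hd : 0 < d) : 0 < (omegaD d).im := by
  have h : 0 < Real.sqrt d := Real.sqrt_pos.mpr (by exact_mod_cast hd)
  unfold omegaD
  split <;> simp [Complex.div_im] <;> linarith

lemma sq_omegaD (d : ℕ) : ∃ p q : ℤ, (omegaD d) ^ 2 = (p : ℂ) + (q : ℂ) * omegaD d := by
  have hs : ((Real.sqrt d : ℂ)) ^ 2 = (d : ℂ) := by
    norm_cast
    exact_mod_cast Real.sq_sqrt (by positivity : (0:ℝ) ≤ (d:ℝ))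
  unfold omegaD
  split
  · rename_i h
    have h4 : 4 ∣ d + 1 := by omega
    obtain ⟨k, hk⟩ := h4
    refine ⟨-(k : ℤ), 1, ?_⟩
    have hdc : (d : ℂ) = 4 * (k : ℂ) - 1 := by
      have : (d : ℂ) + 1 = ((d + 1 : ℕ) : ℂ) := by push_cast; ring
      have h2 : ((d + 1 : ℕ) : ℂ) = 4 * k := by rw [hk]; push_cast; ring
      rw [h2] at this; linear_combination this
    have key : (Real.sqrt d : ℂ) ^ 2 * Complex.I ^ 2 = -(d : ℂ) := by
      rw [Complex.I_sq, hs]; ring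
    push_cast
    linear_combination (1/4 : ℂ) * key - (1/4 : ℂ) * hdc
  · refine ⟨-(d : ℤ), 0, ?_⟩
    push_cast
    rw [mul_pow, Complex.I_sq]
    linear_combination -hs

lemma sq_m_omegaD (d m : ℕ) :
    ∃ p q : ℤ, ((m : ℂ) * omegaD d) ^ 2 = (p : ℂ) + (q : ℂ) * ((m : ℂ) * omegaD d) := by
  obtain ⟨p, q, hpq⟩ := sq_omegaD d
  exact ⟨(m : ℤ) ^ 2 * p, q * m, by push_cast; linear_combination ((m:ℂ))^2 * hpq⟩

lemma mul_mem_orderO {d m : ℕ} {z w : ℂ} (hz : z ∈ orderO d m) (hw : w ∈ orderO d m) :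
    z * w ∈ orderO d m := by
  obtain ⟨a, b, rfl⟩ := mem_orderO_iff.mp hz
  obtain ⟨c, e, rfl⟩ := mem_orderO_iff.mp hw
  obtain ⟨p, q, hpq⟩ := sq_m_omegaD d m
  exact mem_orderO_iff.mpr ⟨a * c + b * e * p, a * e + b * c + b * e * q, by
    push_cast; linear_combination (b : ℂ) * e * hpq⟩

lemma one_mem_orderO {d m : ℕ} : (1 : ℂ) ∈ orderO d m :=
  mem_orderO_iff.mpr ⟨1, 0, by push_cast; ring⟩

/-- If a `ℂ`-linear automorphism of `ℂ²` carries `O_m × O_m` onto `O_n × O_n`, then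
`O_m ⊆ O_n` (the multiplier-ring argument: scalars commute with linear maps). -/
lemma orderO_le_of_image {d m n : ℕ}
    (T : (ℂ × ℂ) ≃ₗ[ℂ] ℂ × ℂ)
    (hT : T '' (((orderO d m).prod (orderO d m) : AddSubgroup (ℂ × ℂ)) : Set (ℂ × ℂ))
        = (((orderO d n).prod (orderO d n) : AddSubgroup (ℂ × ℂ)) : Set (ℂ × ℂ)))
    {z : ℂ} (hz : z ∈ orderO d m) : z ∈ orderO d n := by
  have h10 : ((1 : ℂ), (0 : ℂ)) ∈ T '' (((orderO d m).prod (orderO d m) : AddSubgroup (ℂ × ℂ)) : Set (ℂ × ℂ)) := by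
    rw [hT]
    exact ⟨one_mem_orderO, (orderO d n).zero_mem⟩
  obtain ⟨u, hu, hTu⟩ := h10
  have hzu : (z • u) ∈ (((orderO d m).prod (orderO d m) : AddSubgroup (ℂ × ℂ)) : Set (ℂ × ℂ)) :=
    ⟨mul_mem_orderO hz hu.1, mul_mem_orderO hz hu.2⟩
  have hmem : T (z • u) ∈ (((orderO d n).prod (orderO d n) : AddSubgroup (ℂ × ℂ)) : Set (ℂ × ℂ)) := by
    rw [← hT]; exact ⟨z • u, hzu, rfl⟩
  rw [map_smul, hTu] at hmem
  have h1 : (z • ((1 : ℂ), (0 : ℂ))).1 = z := by simp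
  have := hmem.1
  rw [h1] at this
  exact this

/-- for distinct conductors `m ≠ n`, the abelian surfaces
`E_m × E_m = ℂ²/(O_m × O_m)` and `E_n × E_n = ℂ²/(O_n × O_n)` are not isomorphic as
complex tori: no invertible `ℂ`-linear map of `ℂ²` carries the lattice `O_m × O_m`
onto `O_n × O_n`. -/
theorem squares_of_distinct_conductors_not_isomorphic (d m n : ℕ) (hd : 0 < d)
    (hsq : Squarefree d) (hm : 0 < m) (hn : 0 < n) (hmn : m ≠ n) :
    ¬ ∃ T : (ℂ × ℂ) ≃ₗ[ℂ] ℂ × ℂ,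
        T '' (((orderO d m).prod (orderO d m) : AddSubgroup (ℂ × ℂ)) : Set (ℂ × ℂ))
          = (((orderO d n).prod (orderO d n) : AddSubgroup (ℂ × ℂ)) : Set (ℂ × ℂ)) := by
  rintro ⟨T, hT⟩
  have hT' : T.symm '' (((orderO d n).prod (orderO d n) : AddSubgroup (ℂ × ℂ)) : Set (ℂ × ℂ))
      = (((orderO d m).prod (orderO d m) : AddSubgroup (ℂ × ℂ)) : Set (ℂ × ℂ)) := by
    rw [← hT, ← Set.image_comp]
    simp [Function.comp_def]
  have hmo : (m : ℂ) * omegaD d ∈ orderO d n :=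
    orderO_le_of_image T hT (mem_orderO_iff.mpr ⟨0, 1, by push_cast; ring⟩)
  have hno : (n : ℂ) * omegaD d ∈ orderO d m :=
    orderO_le_of_image T.symm hT' (mem_orderO_iff.mpr ⟨0, 1, by push_cast; ring⟩)
  obtain ⟨a, b, hab⟩ := mem_orderO_iff.mp hmo
  obtain ⟨c, e, hce⟩ := mem_orderO_iff.mp hno
  have him := omegaD_im_pos hd
  have h1 : (m : ℝ) * (omegaD d).im = (b : ℝ) * ((n : ℝ) * (omegaD d).im) := by
    have := congrArg Complex.im hab
    simpa using this
  have h2 : (n : ℝ) * (omegaD d).im = (e : ℝ) * ((m : ℝ) * (omegaD d).im) := by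
    have := congrArg Complex.im hce
    simpa using this
  have hb : (m : ℝ) = (b : ℝ) * n :=
    mul_right_cancel₀ (ne_of_gt him) (by linear_combination h1)
  have he : (n : ℝ) = (e : ℝ) * m :=
    mul_right_cancel₀ (ne_of_gt him) (by linear_combination h2)
  have hbz : (m : ℤ) = b * n := by exact_mod_cast hb
  have hez : (n : ℤ) = e * m := by exact_mod_cast he
  have hb1 : (1 : ℤ) ≤ b := by nlinarith [hbz, (by exact_mod_cast hm : (0:ℤ) < m), (by exact_mod_cast hn : (0:ℤ) < n)]
  have he1 : (1 : ℤ) ≤ e := by nlinarith [(by exact_mod_cast hm : (0:ℤ) < m), (by exact_mod_cast hn : (0:ℤ) < n)]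
  have : (m : ℤ) = n := by nlinarith [(by exact_mod_cast hm : (0:ℤ) < m), (by exact_mod_cast hn : (0:ℤ) < n)]
  exact hmn (by exact_mod_cast this)
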